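/- For two distinct topological orderings τ ≠ τ' of a finite DAG, the sets of negative queries they can answer differ: N(τ) ≠ N(τ'), where N(σ) = { (s,t) : s does not reach t and σ(t) < σ(s) }. -/

import Mathlib

/-- For two distinct topological orderings `τ ≠ τ'` of a finite DAG, the sets
of negative queries they can answer differ: `N(τ) ≠ N(τ')`, where
`N(σ) = { (s, t) | s does not reach t and σ t < σ s }`. -/
theorem distinct_topological_orderings_answer_different_negative_queries
    {V : Type*} [Fintype V] (E : V → V → Prop)
    (hacyc : ∀ v : V, ¬ Relation.TransGen E v v)
    (τ τ' : V ≃ Fin (Fintype.card V))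
    (hτ : ∀ u v : V, E u v → τ u < τ v)
    (hτ' : ∀ u v : V, E u v → τ' u < τ' v)
    (hne : τ ≠ τ') :
    {p : V × V | ¬ Relation.ReflTransGen E p.1 p.2 ∧ τ p.2 < τ p.1} ≠
    {p : V × V | ¬ Relation.ReflTransGen E p.1 p.2 ∧ τ' p.2 < τ' p.1} := by
  intro hset
  apply hne
  have tg : ∀ (σ : V ≃ Fin (Fintype.card V)), (∀ a b, E a b → σ a < σ b) →
      ∀ {u v : V}, Relation.TransGen E u v → σ u < σ v := by
    intro σ hσ u v h
    induction h with
    | single h => exact hσ _ _ h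
    | tail _ h ih => exact ih.trans (hσ _ _ h)
  have hmono : ∀ u v : V, τ u < τ v → τ' u < τ' v := by
    intro u v huv
    by_contra h
    push_neg at h
    have hne2 : u ≠ v := fun e => by subst e; exact lt_irrefl _ huv
    have h' : τ' v < τ' u := lt_of_le_of_ne h (fun e => hne2 (τ'.injective e.symm))
    have hnr : ¬ Relation.ReflTransGen E u v := by
      intro hr
      rcases (Relation.reflTransGen_iff_eq_or_transGen.mp hr) with e | ht
      · exact hne2 e.symm
      · exact absurd (tg τ' hτ' ht) (not_lt.mpr h)
    have hmem : (u, v) ∈ {p : V × V | ¬ Relation.ReflTransGen E p.1 p.2 ∧ τ' p.2 < τ' p.1} :=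
      ⟨hnr, h'⟩
    rw [← hset] at hmem
    exact lt_asymm huv hmem.2
  -- τ' ∘ τ.symm is a strictly monotone bijection of Fin n, hence the identity
  have hsm : StrictMono (fun i => τ' (τ.symm i)) := by
    intro i j hij
    apply hmono
    simpa using hij
  have hrange : Set.range (fun i => τ' (τ.symm i)) = Set.range (id : Fin _ → Fin _) := by
    rw [Set.range_id]
    exact Set.range_eq_univ.mpr ((τ.symm.trans τ').surjective)
  have hid : (fun i => τ' (τ.symm i)) = (id : Fin (Fintype.card V) → Fin (Fintype.card V)) := (hsm.range_inj strictMono_id).mp hrange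
  ext v
  have := congrFun hid (τ v)
  simp at this; exact (Fin.val_eq_val _ _).mpr this.symm
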